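/- In any generalized grid graph with rows [0..N] and diagonal range [−t..t], for every diagonal d ∈ [−t..t] such that (N,d) is reachable, the number of rows i ∈ [0..N−1] such that (i,d) is reachable, potent, and w(i+1,d) = 1 is at most c(N,d) − |d|. -/

import Mathlib

namespace Stmt16

/-- Total weight of a list of vertices regarded as a walk. -/
def pathCost {V : Type*} (wt : V → V → ℕ) : List V → ℕ
  | [] => 0
  | [_] => 0
  | a :: b :: l => wt a b + pathCost wt (b :: l)

/-- `l` is a directed path (walk) from `s` to `v` in the graph with edge relation `E`. -/
def IsPath {V : Type*} (E : V → V → Prop) (s v : V) (l : List V) : Prop :=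
  l.head? = some s ∧ l.getLast? = some v ∧ l.Chain' E

/-- Shortest-path cost from `s` to `v`. -/
noncomputable def cost {V : Type*} (E : V → V → Prop) (wt : V → V → ℕ) (s v : V) : ℕ :=
  sInf { c | ∃ l : List V, IsPath E s v l ∧ pathCost wt l = c }

/-- Vertices of a generalized grid graph with rows `[0..N]` and diagonals `[-t..t]`. -/
def ggVertex (N t : ℕ) (v : ℤ × ℤ) : Prop :=
  0 ≤ v.1 ∧ v.1 ≤ (N : ℤ) ∧ -(t : ℤ) ≤ v.2 ∧ v.2 ≤ (t : ℤ)

/-- Edges of a generalized grid graph: deletion edges `(i,d) → (i+1,d-1)`,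
insertion edges `(i,d) → (i,d+1)`, vertical edges `(i,d) → (i+1,d)`;
present only when both endpoints are vertices. -/
def ggEdge (N t : ℕ) (u v : ℤ × ℤ) : Prop :=
  ggVertex N t u ∧ ggVertex N t v ∧
    (v = (u.1 + 1, u.2 - 1) ∨ v = (u.1, u.2 + 1) ∨ v = (u.1 + 1, u.2))

/-- Weights: a vertical edge `(i,d) → (i+1,d)` has weight `w (i+1) d`;
deletion and insertion edges have weight `1`. -/
def ggWt (w : ℤ → ℤ → ℕ) (u v : ℤ × ℤ) : ℕ :=
  if v = (u.1 + 1, u.2) then w v.1 v.2 else 1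

/-- A vertex `(i,d)` is reachable if `i + d ≥ 0`. -/
def Reachable (N t : ℕ) (v : ℤ × ℤ) : Prop := ggVertex N t v ∧ 0 ≤ v.1 + v.2

/-- Shortest-path cost `c(i,d)` from `(0,0)` in the generalized grid graph. -/
noncomputable def ggCost (N t : ℕ) (w : ℤ → ℤ → ℕ) (v : ℤ × ℤ) : ℕ :=
  cost (ggEdge N t) (ggWt w) (0, 0) v

/-- `(i,d)` is dominated by `(i,d-1)`. -/
def DomL (N t : ℕ) (w : ℤ → ℤ → ℕ) (v : ℤ × ℤ) : Prop :=
  Reachable N t v ∧ Reachable N t (v.1, v.2 - 1) ∧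
    ggCost N t w (v.1, v.2 - 1) + 1 = ggCost N t w v

/-- `(i,d)` is dominated by `(i-1,d+1)`. -/
def DomU (N t : ℕ) (w : ℤ → ℤ → ℕ) (v : ℤ × ℤ) : Prop :=
  Reachable N t v ∧ Reachable N t (v.1 - 1, v.2 + 1) ∧
    ggCost N t w (v.1 - 1, v.2 + 1) + 1 = ggCost N t w v

/-- Potency, defined by (well-founded, hence unambiguous) recursion in
lexicographic order: `(i,d)` is potent iff (dominated by `(i,d-1)` implies
`(i,d-1)` potent and `w (i+1) (d-1) = 1`) and (dominated by `(i-1,d+1)` implies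
`(i-1,d+1)` potent and `w i (d+1) = 1`). -/
inductive Potent (N t : ℕ) (w : ℤ → ℤ → ℕ) : ℤ × ℤ → Prop where
  | mk : ∀ v : ℤ × ℤ,
      (DomL N t w v → Potent N t w (v.1, v.2 - 1)) →
      (DomL N t w v → w (v.1 + 1) (v.2 - 1) = 1) →
      (DomU N t w v → Potent N t w (v.1 - 1, v.2 + 1)) →
      (DomU N t w v → w v.1 (v.2 + 1) = 1) →
      Potent N t w v

section Lists

variable {V : Type*} {E : V → V → Prop} {wt : V → V → ℕ} {s u v : V} {l : List V}

theorem List.chain'_cons {α : Type*} {R : α → α → Prop} {a b : α} {l : List α} :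
    List.Chain' R (a :: b :: l) ↔ R a b ∧ List.Chain' R (b :: l) :=
  List.isChain_cons_cons

theorem List.chain'_append {α : Type*} {R : α → α → Prop} {l₁ l₂ : List α} :
    List.Chain' R (l₁ ++ l₂) ↔ List.Chain' R l₁ ∧ List.Chain' R l₂ ∧
      ∀ x ∈ l₁.getLast?, ∀ y ∈ l₂.head?, R x y :=
  List.isChain_append

theorem List.chain'_singleton {α : Type*} {R : α → α → Prop} (a : α) : List.Chain' R [a] :=
  List.isChain_singleton a

lemma pathCost_snoc (wt : V → V → ℕ) :
    ∀ (l : List V) (u v : V), l.getLast? = some u →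
      pathCost wt (l ++ [v]) = pathCost wt l + wt u v
  | [], u, v, h => by simp at h
  | [a], u, v, h => by
      simp at h; subst h; simp [pathCost]
  | a :: b :: l, u, v, h => by
      rw [List.getLast?_cons_cons] at h
      show pathCost wt (a :: b :: (l ++ [v])) = _
      rw [pathCost, ← List.cons_append, pathCost_snoc wt (b :: l) u v h, pathCost]
      omega

lemma isPath_snoc (h : IsPath E s u l) (he : E u v) : IsPath E s v (l ++ [v]) := by
  obtain ⟨h1, h2, h3⟩ := h
  refine ⟨?_, ?_, ?_⟩
  · cases l with
    | nil => simp at h1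
    | cons a l => simpa using h1
  · simp
  · rw [List.chain'_append]
    refine ⟨h3, List.chain'_singleton v, ?_⟩
    intro x hx y hy
    simp at hy; subst hy
    rw [h2] at hx; simp at hx; subst hx; exact he

lemma last_edge :
    ∀ (l : List V) (s v : V), IsPath E s v l → 2 ≤ l.length →
      ∃ (u : V) (l' : List V), IsPath E s u l' ∧ E u v ∧
        pathCost wt l = pathCost wt l' + wt u v
  | [], s, v, h, hl => by simp at hl
  | [a], s, v, h, hl => by simp at hl
  | a :: b :: l, s, v, h, hl => by
      obtain ⟨h1, h2, h3⟩ := h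
      simp only [List.head?_cons, Option.some.injEq] at h1
      rw [List.chain'_cons] at h3
      obtain ⟨hab, h3⟩ := h3
      rw [List.getLast?_cons_cons] at h2
      cases l with
      | nil =>
        simp only [List.getLast?_singleton, Option.some.injEq] at h2
        refine ⟨a, [a], ⟨by simp [h1], by simp [h1], List.chain'_singleton a⟩, by rw [← h2]; exact hab, by simp [pathCost, h2]⟩
      | cons c l3 =>
        obtain ⟨u, l'', hpath, hedge, hcost⟩ :=
          last_edge (b :: c :: l3) b v ⟨rfl, h2, h3⟩ (by simp)
        obtain ⟨p1, p2, p3⟩ := hpath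
        cases l'' with
        | nil => simp at p1
        | cons b' l4 =>
          simp only [List.head?_cons, Option.some.injEq] at p1
          refine ⟨u, a :: b :: l4, ⟨by simp [h1], ?_, ?_⟩, hedge, ?_⟩
          · rw [List.getLast?_cons_cons]; rw [p1] at p2; exact p2
          · rw [List.chain'_cons]; rw [p1] at p3; exact ⟨hab, p3⟩
          · rw [p1] at hcost
            show wt a b + pathCost wt (b :: c :: l3) = pathCost wt (a :: b :: l4) + wt u v
            rw [hcost]
            show _ = wt a b + pathCost wt (b :: l4) + wt u v
            omega

end Lists

-- part 2: grid lemmas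

section Grid

variable {N t : ℕ} {w : ℤ → ℤ → ℕ}

lemma ggWt_del {u : ℤ × ℤ} : ggWt w u (u.1 + 1, u.2 - 1) = 1 := by
  rw [ggWt, if_neg]
  intro h
  have := congrArg Prod.snd h
  simp at this

lemma ggWt_ins {u : ℤ × ℤ} : ggWt w u (u.1, u.2 + 1) = 1 := by
  rw [ggWt, if_neg]
  intro h
  have := congrArg Prod.fst h
  simp at this

lemma path_bound (N t : ℕ) (w : ℤ → ℤ → ℕ) :
    ∀ (l : List (ℤ × ℤ)) (s v : ℤ × ℤ), IsPath (ggEdge N t) s v l →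
      s.1 ≤ v.1 ∧ s.1 + s.2 ≤ v.1 + v.2 ∧
        v.2 - s.2 ≤ (pathCost (ggWt w) l : ℤ) ∧ s.2 - v.2 ≤ (pathCost (ggWt w) l : ℤ)
  | [], s, v, h => by obtain ⟨h1, _, _⟩ := h; simp at h1
  | [a], s, v, h => by
      obtain ⟨h1, h2, _⟩ := h
      simp at h1 h2; subst h1; subst h2; simp [pathCost]
  | a :: b :: l, s, v, h => by
      obtain ⟨h1, h2, h3⟩ := h
      simp only [List.head?_cons, Option.some.injEq] at h1
      rw [List.chain'_cons] at h3
      obtain ⟨hab, h3⟩ := h3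
      rw [List.getLast?_cons_cons] at h2
      have ih := path_bound N t w (b :: l) b v ⟨rfl, h2, h3⟩
      obtain ⟨_, _, hshape⟩ := hab
      have hc : pathCost (ggWt w) (a :: b :: l) = ggWt w a b + pathCost (ggWt w) (b :: l) := rfl
      subst h1
      obtain ⟨ih1, ih2, ih3, ih4⟩ := ih
      rcases hshape with hb | hb | hb <;>
        [ (have hw : ggWt w a b = 1 := by rw [hb]; exact ggWt_del);
          (have hw : ggWt w a b = 1 := by rw [hb]; exact ggWt_ins);
          (have hw : 0 ≤ ggWt w a b := Nat.zero_le _) ] <;>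
      · have hb1 := congrArg Prod.fst hb
        have hb2 := congrArg Prod.snd hb
        simp only [] at hb1 hb2
        rw [hc]
        push_cast
        omega

end Grid

section Cost

variable {N t : ℕ} {w : ℤ → ℤ → ℕ}

lemma singleton_path : IsPath (ggEdge N t) ((0 : ℤ), (0 : ℤ)) (0, 0) [(0, 0)] :=
  ⟨rfl, rfl, List.chain'_singleton _⟩

lemma exists_path : ∀ (n : ℕ) (v : ℤ × ℤ), (2 * v.1 + v.2).toNat < n →
    Reachable N t v → ∃ l, IsPath (ggEdge N t) (0, 0) v l := by
  intro n
  induction n with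
  | zero => intro v h; omega
  | succ n ih =>
    intro v hn ⟨hvert, hsum⟩
    obtain ⟨hv1, hv2, hv3, hv4⟩ := hvert
    by_cases h0 : v = (0, 0)
    · subst h0; exact ⟨[(0, 0)], singleton_path⟩
    · have hne : ¬(v.1 = 0 ∧ v.2 = 0) := by
        intro ⟨ha, hb⟩; exact h0 (Prod.ext ha hb)
      by_cases hc1 : 0 < v.1 ∧ 0 ≤ (v.1 - 1) + v.2
      · -- vertical edge from (v.1 - 1, v.2)
        have hu : Reachable N t (v.1 - 1, v.2) := ⟨⟨by omega, by omega, hv3, hv4⟩, by omega⟩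
        obtain ⟨l, hl⟩ := ih (v.1 - 1, v.2)
          (by show (2 * (v.1 - 1) + v.2).toNat < n; omega) hu
        refine ⟨l ++ [v], isPath_snoc hl ⟨hu.1, ⟨hv1, hv2, hv3, hv4⟩, Or.inr (Or.inr ?_)⟩⟩
        exact Prod.ext_iff.mpr ⟨by show v.1 = v.1 - 1 + 1; omega, rfl⟩
      · by_cases hc2 : 0 < v.1
        · -- deletion edge from (v.1 - 1, v.2 + 1); here v.1 + v.2 = 0
          have hu : Reachable N t (v.1 - 1, v.2 + 1) :=
            ⟨⟨by omega, by omega, by omega, by omega⟩, by omega⟩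
          obtain ⟨l, hl⟩ := ih (v.1 - 1, v.2 + 1)
            (by show (2 * (v.1 - 1) + (v.2 + 1)).toNat < n; omega) hu
          refine ⟨l ++ [v], isPath_snoc hl ⟨hu.1, ⟨hv1, hv2, hv3, hv4⟩, Or.inl ?_⟩⟩
          exact Prod.ext_iff.mpr ⟨by show v.1 = v.1 - 1 + 1; omega,
            by show v.2 = v.2 + 1 - 1; omega⟩
        · -- insertion edge from (v.1, v.2 - 1); here v.1 = 0, v.2 > 0
          have hu : Reachable N t (v.1, v.2 - 1) :=
            ⟨⟨hv1, hv2, by omega, by omega⟩, by omega⟩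
          obtain ⟨l, hl⟩ := ih (v.1, v.2 - 1)
            (by show (2 * v.1 + (v.2 - 1)).toNat < n; omega) hu
          refine ⟨l ++ [v], isPath_snoc hl ⟨hu.1, ⟨hv1, hv2, hv3, hv4⟩, Or.inr (Or.inl ?_)⟩⟩
          exact Prod.ext_iff.mpr ⟨rfl, by show v.2 = v.2 - 1 + 1; omega⟩

lemma reachable_path (hv : Reachable N t v) : ∃ l, IsPath (ggEdge N t) (0, 0) v l :=
  exists_path ((2 * v.1 + v.2).toNat + 1) v (by omega) hv

lemma cost_le_of_path {v : ℤ × ℤ} {l : List (ℤ × ℤ)} (h : IsPath (ggEdge N t) (0, 0) v l) :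
    ggCost N t w v ≤ pathCost (ggWt w) l :=
  Nat.sInf_le ⟨l, h, rfl⟩

lemma exists_shortest {v : ℤ × ℤ} (hv : Reachable N t v) :
    ∃ l, IsPath (ggEdge N t) (0, 0) v l ∧ pathCost (ggWt w) l = ggCost N t w v := by
  obtain ⟨l, hl⟩ := reachable_path hv
  exact Nat.sInf_mem (⟨pathCost (ggWt w) l, l, hl, rfl⟩ :
    Set.Nonempty {c | ∃ l, IsPath (ggEdge N t) (0, 0) v l ∧ pathCost (ggWt w) l = c})

lemma cost_triangle {u v : ℤ × ℤ} (hu : Reachable N t u) (he : ggEdge N t u v) :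
    ggCost N t w v ≤ ggCost N t w u + ggWt w u v := by
  obtain ⟨l, hl, hcost⟩ := exists_shortest (w := w) hu
  have h2 := cost_le_of_path (w := w) (isPath_snoc hl he)
  rwa [pathCost_snoc _ l u v hl.2.1, hcost] at h2

lemma exists_pred {v : ℤ × ℤ} (hv : Reachable N t v) (h0 : v ≠ (0, 0)) :
    ∃ u, ggEdge N t u v ∧ Reachable N t u ∧ ggCost N t w u + ggWt w u v ≤ ggCost N t w v := by
  obtain ⟨l, hl, hcost⟩ := exists_shortest (w := w) hv
  have hlen : 2 ≤ l.length := by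
    rcases l with _ | ⟨a, _ | ⟨b, l2⟩⟩
    · exact absurd hl.1 (by simp)
    · exfalso
      obtain ⟨p1, p2, _⟩ := hl
      simp only [List.head?_cons, List.getLast?_singleton, Option.some.injEq] at p1 p2
      exact h0 (by rw [← p2, p1])
    · simp
  obtain ⟨u, l', hl', he, hc⟩ := last_edge (wt := ggWt w) l (0, 0) v hl hlen
  have hreach : Reachable N t u := by
    refine ⟨he.1, ?_⟩
    have := path_bound N t w l' (0, 0) u hl'
    simp at this
    omega
  exact ⟨u, he, hreach, by
    have := cost_le_of_path (w := w) hl'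
    omega⟩

lemma cost_lb {v : ℤ × ℤ} (hv : Reachable N t v) : v.2.natAbs ≤ ggCost N t w v := by
  obtain ⟨l, hl, hcost⟩ := exists_shortest (w := w) hv
  have := path_bound N t w l (0, 0) v hl
  simp at this
  omega

lemma cost_zero : ggCost N t w (0, 0) = 0 :=
  Nat.le_zero.mp (by simpa [pathCost] using cost_le_of_path (w := w) singleton_path)

lemma cost_antidiag : ∀ n : ℕ, (n : ℤ) ≤ N → (n : ℤ) ≤ t → ggCost N t w ((n : ℤ), -(n : ℤ)) ≤ n := by
  intro n
  induction n with
  | zero => intro _ _; simpa using cost_zero.le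
  | succ n ih =>
    intro hN ht
    push_cast at hN ht ⊢
    have hu : Reachable N t ((n : ℤ), -(n : ℤ)) := ⟨⟨by omega, by omega, by omega, by omega⟩, by omega⟩
    have he : ggEdge N t ((n : ℤ), -(n : ℤ)) ((n : ℤ) + 1, -(n : ℤ) - 1) :=
      ⟨hu.1, ⟨by omega, by omega, by omega, by omega⟩, Or.inl rfl⟩
    have h3 := cost_triangle (w := w) hu he
    have h4 : ggWt w ((n : ℤ), -(n : ℤ)) ((n : ℤ) + 1, -(n : ℤ) - 1) = 1 := ggWt_del
    have h5 := ih (by omega) (by omega)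
    have heq : ((n : ℤ) + 1, -(n : ℤ) - 1) = ((n : ℤ) + 1, -((n : ℤ) + 1)) :=
      Prod.ext_iff.mpr ⟨rfl, by ring⟩
    rw [heq] at h3 h4
    omega

lemma cost_row0 : ∀ n : ℕ, (n : ℤ) ≤ t → ggCost N t w (0, (n : ℤ)) ≤ n := by
  intro n
  induction n with
  | zero => intro _; simpa using cost_zero.le
  | succ n ih =>
    intro ht
    push_cast at ht ⊢
    have hu : Reachable N t (0, (n : ℤ)) := ⟨⟨le_refl 0, by omega, by omega, by omega⟩, by omega⟩
    have he : ggEdge N t ((0 : ℤ), (n : ℤ)) (0, (n : ℤ) + 1) :=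
      ⟨hu.1, ⟨le_refl 0, by omega, by omega, by omega⟩, Or.inr (Or.inl rfl)⟩
    have h3 := cost_triangle (w := w) hu he
    have h4 : ggWt w ((0 : ℤ), (n : ℤ)) ((0 : ℤ), (n : ℤ) + 1) = 1 := ggWt_ins
    have h5 := ih (by omega)
    omega

end Cost

section Main

variable {N t : ℕ} {w : ℤ → ℤ → ℕ}

lemma pair_eq {a b c d : ℤ} (h1 : a = c) (h2 : b = d) : ((a, b) : ℤ × ℤ) = (c, d) := by
  rw [h1, h2]

lemma tri_del {i d2 : ℤ} (hu : Reachable N t (i, d2)) (hv : ggVertex N t (i + 1, d2 - 1)) :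
    ggCost N t w (i + 1, d2 - 1) ≤ ggCost N t w (i, d2) + 1 := by
  have h := cost_triangle (w := w) hu
    (⟨hu.1, hv, Or.inl rfl⟩ : ggEdge N t (i, d2) (i + 1, d2 - 1))
  have hwt : ggWt w (i, d2) (i + 1, d2 - 1) = 1 := ggWt_del
  omega

lemma tri_ins {i d2 : ℤ} (hu : Reachable N t (i, d2)) (hv : ggVertex N t (i, d2 + 1)) :
    ggCost N t w (i, d2 + 1) ≤ ggCost N t w (i, d2) + 1 := by
  have h := cost_triangle (w := w) hu
    (⟨hu.1, hv, Or.inr (Or.inl rfl)⟩ : ggEdge N t (i, d2) (i, d2 + 1))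
  have hwt : ggWt w (i, d2) (i, d2 + 1) = 1 := ggWt_ins
  omega

lemma cost_lb' {i d2 : ℤ} (hv : Reachable N t (i, d2)) : d2.natAbs ≤ ggCost N t w (i, d2) :=
  cost_lb hv

lemma cost_antidiag' {i d2 : ℤ} (hvert : ggVertex N t (i, d2)) (hsum : i + d2 = 0) :
    ggCost N t w (i, d2) ≤ i.toNat := by
  obtain ⟨h1, h2, h3, h4⟩ := hvert
  have := cost_antidiag (N := N) (t := t) (w := w) i.toNat (by omega) (by omega)
  rwa [show ((i.toNat : ℤ), -(i.toNat : ℤ)) = ((i : ℤ), d2) from pair_eq (by omega) (by omega)]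
    at this

lemma costAB : ∀ μ : ℕ,
    (∀ i d2 : ℤ, (2 * i + d2 + t + 2).toNat ≤ μ → Reachable N t (i, d2) →
        ggVertex N t (i + 1, d2) → ggCost N t w (i, d2) ≤ ggCost N t w (i + 1, d2)) ∧
    (∀ i d2 : ℤ, (2 * i + d2 + t + 1).toNat ≤ μ → Reachable N t (i, d2) →
        ggVertex N t (i, d2 + 1) → ggCost N t w (i, d2) ≤ ggCost N t w (i, d2 + 1) + 1) := by
  intro μ
  induction μ using Nat.strong_induction_on with
  | _ μ ih =>
  constructor
  · -- Part A
    intro i d2 hbud ⟨⟨q1, q2, q3, q4⟩, hsum⟩ hvert'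
    have hreach : Reachable N t (i, d2) := ⟨⟨q1, q2, q3, q4⟩, hsum⟩
    have hμ : 1 ≤ μ := by omega
    have hvreach : Reachable N t (i + 1, d2) := ⟨hvert', by simp; omega⟩
    obtain ⟨u, ⟨hu_vert, _, hshape⟩, hu_reach, hcost⟩ :=
      exists_pred (w := w) hvreach (by
        intro h
        have e1 : i + 1 = (0 : ℤ) := congrArg Prod.fst h
        omega)
    rcases hshape with hb | hb | hb
    · -- deletion pred: u = (i, d2 + 1)
      have e1 : i + 1 = u.1 + 1 := congrArg Prod.fst hb
      have e2 : d2 = u.2 - 1 := congrArg Prod.snd hb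
      have hu_eq : u = ((i : ℤ), d2 + 1) := Prod.ext_iff.mpr ⟨by omega, by omega⟩
      rw [hu_eq] at hcost hu_vert
      have hwt : ggWt w ((i : ℤ), d2 + 1) (i + 1, d2) = 1 := by
        rw [show ((i + 1 : ℤ), d2) = (((i : ℤ), d2 + 1).1 + 1, ((i : ℤ), d2 + 1).2 - 1) from
          pair_eq (by omega) (by omega)]
        exact ggWt_del
      rw [hwt] at hcost
      have hB := (ih (μ - 1) (by omega)).2 i d2 (by omega) hreach hu_vert
      omega
    · -- insertion pred: u = (i + 1, d2 - 1)
      have e1 : i + 1 = u.1 := congrArg Prod.fst hb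
      have e2 : d2 = u.2 + 1 := congrArg Prod.snd hb
      have hu_eq : u = ((i + 1 : ℤ), d2 - 1) := Prod.ext_iff.mpr ⟨by omega, by omega⟩
      rw [hu_eq] at hcost hu_vert hu_reach
      obtain ⟨⟨r1, r2, r3, r4⟩, rsum⟩ := hu_reach
      have hwt : ggWt w ((i + 1 : ℤ), d2 - 1) (i + 1, d2) = 1 := by
        rw [show ((i + 1 : ℤ), d2) = (((i + 1 : ℤ), d2 - 1).1, ((i + 1 : ℤ), d2 - 1).2 + 1) from
          pair_eq (by omega) (by omega)]
        exact ggWt_ins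
      rw [hwt] at hcost
      by_cases hcase : 1 ≤ i + d2
      · -- go through (i, d2 - 1)
        have hreach' : Reachable N t ((i : ℤ), d2 - 1) :=
          ⟨⟨by omega, by omega, by omega, by omega⟩, by simp; omega⟩
        have hA := (ih (μ - 1) (by omega)).1 i (d2 - 1) (by omega) hreach'
          (by rw [show ((i + 1 : ℤ), d2 - 1) = ((i : ℤ) + 1, d2 - 1) from rfl] at hu_vert
              exact hu_vert)
        have htri : ggCost N t w ((i : ℤ), d2 - 1 + 1) ≤ ggCost N t w ((i : ℤ), d2 - 1) + 1 :=
          tri_ins hreach' (by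
            rw [show ((i : ℤ), d2 - 1 + 1) = ((i : ℤ), d2) from pair_eq rfl (by omega)]
            exact ⟨q1, q2, q3, q4⟩)
        rw [show ((i : ℤ), d2 - 1 + 1) = ((i : ℤ), d2) from pair_eq rfl (by omega)] at htri
        omega
      · -- corner: i + d2 = 0
        have hzero : i + d2 = 0 := by omega
        have hcheap := cost_antidiag' (w := w) ⟨q1, q2, q3, q4⟩ hzero
        have hlb := cost_lb' (w := w) ⟨⟨r1, r2, r3, r4⟩, rsum⟩
        omega
    · -- vertical pred: u = (i, d2)
      have e1 : i + 1 = u.1 + 1 := congrArg Prod.fst hb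
      have e2 : d2 = u.2 := congrArg Prod.snd hb
      have hu_eq : u = ((i : ℤ), d2) := Prod.ext_iff.mpr ⟨by omega, by omega⟩
      rw [hu_eq] at hcost
      omega
  · -- Part B
    intro i d2 hbud ⟨⟨q1, q2, q3, q4⟩, hsum⟩ hvert'
    have hreach : Reachable N t (i, d2) := ⟨⟨q1, q2, q3, q4⟩, hsum⟩
    have hμ : 1 ≤ μ := by omega
    have hvreach : Reachable N t ((i : ℤ), d2 + 1) := ⟨hvert', by simp; omega⟩
    obtain ⟨u, ⟨hu_vert, _, hshape⟩, hu_reach, hcost⟩ :=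
      exists_pred (w := w) hvreach (by
        intro h
        have e1 : i = (0 : ℤ) := congrArg Prod.fst h
        have e2 : d2 + 1 = (0 : ℤ) := congrArg Prod.snd h
        omega)
    rcases hshape with hb | hb | hb
    · -- deletion pred: u = (i - 1, d2 + 2)
      have e1 : i = u.1 + 1 := congrArg Prod.fst hb
      have e2 : d2 + 1 = u.2 - 1 := congrArg Prod.snd hb
      have hu_eq : u = ((i - 1 : ℤ), d2 + 2) := Prod.ext_iff.mpr ⟨by omega, by omega⟩
      rw [hu_eq] at hcost hu_vert hu_reach
      obtain ⟨⟨r1, r2, r3, r4⟩, rsum⟩ := hu_reach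
      have hwt : ggWt w ((i - 1 : ℤ), d2 + 2) ((i : ℤ), d2 + 1) = 1 := by
        rw [show ((i : ℤ), d2 + 1) = (((i - 1 : ℤ), d2 + 2).1 + 1, ((i - 1 : ℤ), d2 + 2).2 - 1)
          from pair_eq (by omega) (by omega)]
        exact ggWt_del
      rw [hwt] at hcost
      have hmid : Reachable N t ((i - 1 : ℤ), d2 + 1) :=
        ⟨⟨by omega, by omega, by omega, by omega⟩, by simp; omega⟩
      -- B at (i-1, d2+1)
      have hB := (ih (μ - 1) (by omega)).2 (i - 1) (d2 + 1) (by omega) hmid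
        (by rw [show ((i - 1 : ℤ), d2 + 1 + 1) = ((i - 1 : ℤ), d2 + 2) from pair_eq rfl (by omega)]
            exact ⟨r1, r2, r3, r4⟩)
      rw [show ((i - 1 : ℤ), d2 + 1 + 1) = ((i - 1 : ℤ), d2 + 2) from pair_eq rfl (by omega)] at hB
      -- deletion edge (i-1, d2+1) → (i, d2)
      have htri : ggCost N t w ((i - 1 + 1 : ℤ), d2 + 1 - 1) ≤ ggCost N t w ((i - 1 : ℤ), d2 + 1) + 1 :=
        tri_del hmid (by
          rw [show ((i - 1 + 1 : ℤ), d2 + 1 - 1) = ((i : ℤ), d2) from pair_eq (by omega) (by omega)]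
          exact ⟨q1, q2, q3, q4⟩)
      rw [show ((i - 1 + 1 : ℤ), d2 + 1 - 1) = ((i : ℤ), d2) from pair_eq (by omega) (by omega)]
        at htri
      omega
    · -- insertion pred: u = (i, d2)
      have e1 : i = u.1 := congrArg Prod.fst hb
      have e2 : d2 + 1 = u.2 + 1 := congrArg Prod.snd hb
      have hu_eq : u = ((i : ℤ), d2) := Prod.ext_iff.mpr ⟨by omega, by omega⟩
      rw [hu_eq] at hcost
      omega
    · -- vertical pred: u = (i - 1, d2 + 1)
      have e1 : i = u.1 + 1 := congrArg Prod.fst hb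
      have e2 : d2 + 1 = u.2 := congrArg Prod.snd hb
      have hu_eq : u = ((i - 1 : ℤ), d2 + 1) := Prod.ext_iff.mpr ⟨by omega, by omega⟩
      rw [hu_eq] at hcost hu_reach
      have htri : ggCost N t w ((i - 1 + 1 : ℤ), d2 + 1 - 1) ≤ ggCost N t w ((i - 1 : ℤ), d2 + 1) + 1 :=
        tri_del hu_reach (by
          rw [show ((i - 1 + 1 : ℤ), d2 + 1 - 1) = ((i : ℤ), d2) from pair_eq (by omega) (by omega)]
          exact ⟨q1, q2, q3, q4⟩)
      rw [show ((i - 1 + 1 : ℤ), d2 + 1 - 1) = ((i : ℤ), d2) from pair_eq (by omega) (by omega)]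
        at htri
      omega

lemma costA {i d2 : ℤ} (hreach : Reachable N t (i, d2)) (hvert : ggVertex N t (i + 1, d2)) :
    ggCost N t w (i, d2) ≤ ggCost N t w (i + 1, d2) :=
  (costAB (2 * i + d2 + t + 2).toNat).1 i d2 le_rfl hreach hvert

lemma costB {i d2 : ℤ} (hreach : Reachable N t (i, d2)) (hvert : ggVertex N t (i, d2 + 1)) :
    ggCost N t w (i, d2) ≤ ggCost N t w (i, d2 + 1) + 1 :=
  (costAB (2 * i + d2 + t + 1).toNat).2 i d2 le_rfl hreach hvert

end Main

section Main2

variable {N t : ℕ} {w : ℤ → ℤ → ℕ}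

lemma cost_mono : ∀ (k : ℕ) {i d2 : ℤ}, Reachable N t (i, d2) →
    ggVertex N t (i + (k : ℤ), d2) → ggCost N t w (i, d2) ≤ ggCost N t w (i + (k : ℤ), d2) := by
  intro k
  induction k with
  | zero =>
    intro i d2 h hv
    rw [show (i + ((0 : ℕ) : ℤ), d2) = ((i : ℤ), d2) from pair_eq (by push_cast; ring) rfl]
  | succ k ih =>
    intro i d2 h hv
    obtain ⟨⟨q1, q2, q3, q4⟩, hsum⟩ := h
    obtain ⟨p1, p2, p3, p4⟩ := hv
    have hp2 : i + ((k : ℤ) + 1) ≤ (N : ℤ) := by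
      have : ((k + 1 : ℕ) : ℤ) = (k : ℤ) + 1 := by push_cast; ring
      rw [this] at p2; exact p2
    have hvk : ggVertex N t (i + (k : ℤ), d2) := ⟨by omega, by omega, q3, q4⟩
    have h1 := ih ⟨⟨q1, q2, q3, q4⟩, hsum⟩ hvk
    have hrk : Reachable N t (i + (k : ℤ), d2) := ⟨hvk, by
      show 0 ≤ i + (k : ℤ) + d2; omega⟩
    have h2 := costA (w := w) hrk ⟨by omega, by omega, q3, q4⟩
    rw [show (i + (k : ℤ) + 1, d2) = (i + ((k + 1 : ℕ) : ℤ), d2) from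
      pair_eq (by push_cast; ring) rfl] at h2
    omega

lemma potent_step : ∀ μ : ℕ, ∀ i d2 : ℤ, (2 * i + d2 + t + 1).toNat ≤ μ →
    Reachable N t (i, d2) → i + 1 ≤ (N : ℤ) → Potent N t w (i, d2) → w (i + 1) d2 = 1 →
    ggCost N t w (i, d2) + 1 ≤ ggCost N t w (i + 1, d2) := by
  intro μ
  induction μ using Nat.strong_induction_on with
  | _ μ ih =>
  intro i d2 hbud hreach hiN hpot hmis
  obtain ⟨⟨q1, q2, q3, q4⟩, hsum⟩ := hreach
  have hreach : Reachable N t (i, d2) := ⟨⟨q1, q2, q3, q4⟩, hsum⟩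
  by_contra hcon
  have hle : ggCost N t w (i + 1, d2) ≤ ggCost N t w (i, d2) := by omega
  have hvreach : Reachable N t (i + 1, d2) := ⟨⟨by omega, by omega, q3, q4⟩, by
    show 0 ≤ i + 1 + d2; omega⟩
  obtain ⟨u, ⟨hu_vert, _, hshape⟩, hu_reach, hcost⟩ :=
    exists_pred (w := w) hvreach (by
      intro h
      have e1 : i + 1 = (0 : ℤ) := congrArg Prod.fst h
      omega)
  rcases hshape with hb | hb | hb
  · -- deletion pred: u = (i, d2 + 1)
    have e1 : i + 1 = u.1 + 1 := congrArg Prod.fst hb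
    have e2 : d2 = u.2 - 1 := congrArg Prod.snd hb
    have hu_eq : u = ((i : ℤ), d2 + 1) := Prod.ext_iff.mpr ⟨by omega, by omega⟩
    rw [hu_eq] at hcost hu_vert hu_reach
    obtain ⟨⟨r1, r2, r3, r4⟩, rsum⟩ := hu_reach
    have hwt : ggWt w ((i : ℤ), d2 + 1) (i + 1, d2) = 1 := by
      rw [show ((i + 1 : ℤ), d2) = (((i : ℤ), d2 + 1).1 + 1, ((i : ℤ), d2 + 1).2 - 1) from
        pair_eq (by omega) (by omega)]
      exact ggWt_del
    rw [hwt] at hcost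
    by_cases hi0 : i = 0
    · -- corner: row 0
      have hd2 : 0 ≤ d2 := by omega
      have hcheap := cost_row0 (N := N) (t := t) (w := w) d2.toNat (by omega)
      rw [show ((0 : ℤ), (d2.toNat : ℤ)) = ((i : ℤ), d2) from pair_eq (by omega) (by omega)]
        at hcheap
      have hlb := cost_lb' (w := w) ⟨⟨r1, r2, r3, r4⟩, rsum⟩
      omega
    · -- main: i ≥ 1, DomU
      have hmid : Reachable N t ((i - 1 : ℤ), d2 + 1) :=
        ⟨⟨by omega, by omega, by omega, by omega⟩, by show 0 ≤ i - 1 + (d2 + 1); omega⟩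
      have hA := costA (w := w) hmid (show ggVertex N t ((i - 1 : ℤ) + 1, d2 + 1) from
        ⟨by omega, by omega, by omega, by omega⟩)
      rw [show ((i - 1 : ℤ) + 1, d2 + 1) = ((i : ℤ), d2 + 1) from pair_eq (by omega) rfl] at hA
      have htri : ggCost N t w ((i - 1 + 1 : ℤ), d2 + 1 - 1) ≤ ggCost N t w ((i - 1 : ℤ), d2 + 1) + 1 :=
        tri_del hmid (by
          rw [show ((i - 1 + 1 : ℤ), d2 + 1 - 1) = ((i : ℤ), d2) from pair_eq (by omega) (by omega)]
          exact ⟨q1, q2, q3, q4⟩)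
      rw [show ((i - 1 + 1 : ℤ), d2 + 1 - 1) = ((i : ℤ), d2) from pair_eq (by omega) (by omega)]
        at htri
      have hdom : DomU N t w (i, d2) := ⟨hreach, hmid, by
        show ggCost N t w ((i : ℤ) - 1, d2 + 1) + 1 = ggCost N t w ((i : ℤ), d2)
        omega⟩
      obtain ⟨_, _, _, h3, h4⟩ := hpot
      have hP : Potent N t w ((i - 1 : ℤ), d2 + 1) := h3 hdom
      have hW : w ((i - 1 : ℤ) + 1) (d2 + 1) = 1 := by
        rw [show ((i - 1 : ℤ) + 1) = (i : ℤ) by omega]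
        exact h4 hdom
      have hIH := ih (μ - 1) (by omega) (i - 1) (d2 + 1) (by omega) hmid (by omega) hP hW
      rw [show ((i - 1 : ℤ) + 1, d2 + 1) = ((i : ℤ), d2 + 1) from pair_eq (by omega) rfl] at hIH
      omega
  · -- insertion pred: u = (i + 1, d2 - 1)
    have e1 : i + 1 = u.1 := congrArg Prod.fst hb
    have e2 : d2 = u.2 + 1 := congrArg Prod.snd hb
    have hu_eq : u = ((i + 1 : ℤ), d2 - 1) := Prod.ext_iff.mpr ⟨by omega, by omega⟩
    rw [hu_eq] at hcost hu_vert hu_reach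
    obtain ⟨⟨r1, r2, r3, r4⟩, rsum⟩ := hu_reach
    have hwt : ggWt w ((i + 1 : ℤ), d2 - 1) (i + 1, d2) = 1 := by
      rw [show ((i + 1 : ℤ), d2) = (((i + 1 : ℤ), d2 - 1).1, ((i + 1 : ℤ), d2 - 1).2 + 1) from
        pair_eq (by omega) (by omega)]
      exact ggWt_ins
    rw [hwt] at hcost
    by_cases hcase : 1 ≤ i + d2
    · -- main: DomL
      have hreach' : Reachable N t ((i : ℤ), d2 - 1) :=
        ⟨⟨q1, q2, by omega, by omega⟩, by show 0 ≤ i + (d2 - 1); omega⟩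
      have hA := costA (w := w) hreach' (show ggVertex N t ((i : ℤ) + 1, d2 - 1) from
        ⟨by omega, by omega, by omega, by omega⟩)
      have htri : ggCost N t w ((i : ℤ), d2 - 1 + 1) ≤ ggCost N t w ((i : ℤ), d2 - 1) + 1 :=
        tri_ins hreach' (by
          rw [show ((i : ℤ), d2 - 1 + 1) = ((i : ℤ), d2) from pair_eq rfl (by omega)]
          exact ⟨q1, q2, q3, q4⟩)
      rw [show ((i : ℤ), d2 - 1 + 1) = ((i : ℤ), d2) from pair_eq rfl (by omega)] at htri
      have hdom : DomL N t w (i, d2) := ⟨hreach, hreach', by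
        show ggCost N t w ((i : ℤ), d2 - 1) + 1 = ggCost N t w ((i : ℤ), d2)
        omega⟩
      obtain ⟨_, h1, h2, _, _⟩ := hpot
      have hP : Potent N t w ((i : ℤ), d2 - 1) := h1 hdom
      have hW : w ((i : ℤ) + 1) (d2 - 1) = 1 := h2 hdom
      have hIH := ih (μ - 1) (by omega) i (d2 - 1) (by omega) hreach' (by omega) hP hW
      omega
    · -- corner: i + d2 = 0
      have hzero : i + d2 = 0 := by omega
      have hcheap := cost_antidiag' (w := w) ⟨q1, q2, q3, q4⟩ hzero
      have hlb := cost_lb' (w := w) ⟨⟨r1, r2, r3, r4⟩, rsum⟩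
      omega
  · -- vertical pred: u = (i, d2)
    have e1 : i + 1 = u.1 + 1 := congrArg Prod.fst hb
    have e2 : d2 = u.2 := congrArg Prod.snd hb
    have hu_eq : u = ((i : ℤ), d2) := Prod.ext_iff.mpr ⟨by omega, by omega⟩
    rw [hu_eq] at hcost
    have hwt : ggWt w ((i : ℤ), d2) (i + 1, d2) = w (i + 1) d2 := if_pos rfl
    rw [hwt, hmis] at hcost
    omega

end Main2

theorem stmt16 (N t : ℕ) (w : ℤ → ℤ → ℕ)
    (hw1 : ∀ i d, w i d ≤ 1)
    (hw0 : ∀ i d : ℤ, ¬(1 ≤ i ∧ i ≤ (N : ℤ) ∧ -(t : ℤ) ≤ d ∧ d ≤ (t : ℤ)) → w i d = 0)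
    (d : ℤ) (hr : Reachable N t ((N : ℤ), d)) :
    ({i : ℤ | 0 ≤ i ∧ i ≤ (N : ℤ) - 1 ∧ Reachable N t (i, d) ∧ Potent N t w (i, d) ∧
        w (i + 1) d = 1}.ncard : ℤ)
      ≤ (ggCost N t w ((N : ℤ), d) : ℤ) - |d| := by
  classical
  set S : Set ℤ := {i : ℤ | 0 ≤ i ∧ i ≤ (N : ℤ) - 1 ∧ Reachable N t (i, d) ∧ Potent N t w (i, d) ∧
      w (i + 1) d = 1} with hS
  set g : ℤ → ℕ := fun i => ggCost N t w (i, d) with hg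
  have hmono : ∀ i j : ℤ, Reachable N t (i, d) → ggVertex N t (j, d) → i ≤ j → g i ≤ g j := by
    intro i j hre hvj hij
    have hk : (i + (((j - i).toNat : ℕ) : ℤ), d) = ((j : ℤ), d) := pair_eq (by omega) rfl
    have := cost_mono (w := w) (j - i).toNat hre (by rw [hk]; exact hvj)
    rwa [hk] at this
  have key : ∀ i ∈ S, ∀ j : ℤ, i < j → ggVertex N t (j, d) → g i < g j := by
    intro i hi j hij hvj
    obtain ⟨h0, h1, hre, hpo, hwm⟩ := hi
    obtain ⟨p1, p2, p3, p4⟩ := hvj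
    obtain ⟨⟨q1, q2, q3, q4⟩, hsum⟩ := hre
    have hre' : Reachable N t (i, d) := ⟨⟨q1, q2, q3, q4⟩, hsum⟩
    have hstep := potent_step (2 * i + d + t + 1).toNat i d le_rfl hre' (by omega) hpo hwm
    have hre1 : Reachable N t (i + 1, d) := ⟨⟨by omega, by omega, q3, q4⟩, by
      show 0 ≤ i + 1 + d; omega⟩
    have h2 := hmono (i + 1) j hre1 ⟨p1, p2, p3, p4⟩ (by omega)
    have : g i + 1 ≤ g (i + 1) := hstep
    omega
  have hinj : Set.InjOn g S := by
    intro a ha b hb hab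
    by_contra hne
    rcases lt_or_gt_of_ne hne with h | h
    · have := key a ha b h hb.2.2.1.1
      omega
    · have := key b hb a h ha.2.2.1.1
      omega
  have himg : g '' S ⊆ ↑(Finset.Ico d.natAbs (ggCost N t w ((N : ℤ), d))) := by
    rintro x ⟨i, hi, rfl⟩
    simp only [Finset.coe_Ico, Set.mem_Ico]
    constructor
    · exact cost_lb' hi.2.2.1
    · have := key i hi (N : ℤ) (by have := hi.2.1; omega) hr.1
      exact this
  have h1 : S.ncard = (g '' S).ncard := (Set.ncard_image_of_injOn hinj).symm
  have h2 : (g '' S).ncard ≤ (Finset.Ico d.natAbs (ggCost N t w ((N : ℤ), d))).card := by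
    have := Set.ncard_le_ncard himg (Finset.finite_toSet _)
    rwa [Set.ncard_coe_finset] at this
  have h3 : (Finset.Ico d.natAbs (ggCost N t w ((N : ℤ), d))).card
      = ggCost N t w ((N : ℤ), d) - d.natAbs := Nat.card_Ico _ _
  have hlb : d.natAbs ≤ ggCost N t w ((N : ℤ), d) := cost_lb' hr
  have habs : |d| = (d.natAbs : ℤ) := Int.abs_eq_natAbs d
  rw [habs]
  omega

end Stmt16
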